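/- (i) If 0 < d ≤ e then φ_d has a unique fixed point in [0,1], and this fixed point is the unique global maximiser of Φ_d on [0,1]. (ii) If d > e then φ_d has exactly three fixed points 0 < α_* < α_0 < α^* < 1 in [0,1]; α_* and α^* are stable (φ_d' < 1 there) while α_0 is unstable; Φ_d(α_*) = Φ_d(α^*) > Φ_d(α) for every α ∈ [0,1] \ {α_*, α^*}; and α_0 satisfies 1 − α_0 = exp(−d(1 − α_0)). -/

import Mathlib

open Filter Topology MeasureTheory ProbabilityTheory

noncomputable section

/-- `φ_d(α) = 1 − exp(−d·exp(−d(1−α)))`. -/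
def phiFn (d α : ℝ) : ℝ := 1 - Real.exp (-d * Real.exp (-d * (1 - α)))

/-- `Φ_d(α) = exp(−d·exp(−d(1−α))) + (1 + d(1−α))·exp(−d(1−α)) − 1`. -/
def PhiFn (d α : ℝ) : ℝ :=
  Real.exp (-d * Real.exp (-d * (1 - α))) + (1 + d * (1 - α)) * Real.exp (-d * (1 - α)) - 1

/-- `α_*(d)`: the smallest fixed point of `φ_d` in `[0,1]`. -/
def alphaMin (d : ℝ) : ℝ := sInf {α : ℝ | α ∈ Set.Icc (0:ℝ) 1 ∧ phiFn d α = α}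

/-- `α^*(d)`: the largest fixed point of `φ_d` in `[0,1]`. -/
def alphaMax (d : ℝ) : ℝ := sSup {α : ℝ | α ∈ Set.Icc (0:ℝ) 1 ∧ phiFn d α = α}

/-- `α_0(d)`: for `d ≤ e` equal to `α_*(d)`; for `d > e` the unique fixed point of `φ_d`
in the open interval `(α_*(d), α^*(d))`. -/
def alphaMid (d : ℝ) : ℝ :=
  if d ≤ Real.exp 1 then alphaMin d
  else sInf {α : ℝ | α ∈ Set.Ioo (alphaMin d) (alphaMax d) ∧ phiFn d α = α}

open Real Set

/-- auxiliary: `H_d(α) = d·exp(−d(1−α)) + log(1−α)`. -/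
def Hfn (d α : ℝ) : ℝ := d * Real.exp (-d * (1 - α)) + Real.log (1 - α)

/-- auxiliary: `K_d(x) = exp(dx) − d²x`. -/
def Kfn (d x : ℝ) : ℝ := Real.exp (d * x) - d ^ 2 * x

lemma hasDerivAt_E (d α : ℝ) :
    HasDerivAt (fun a : ℝ => Real.exp (-d * (1 - a))) (d * Real.exp (-d * (1 - α))) α := by
  have h1 : HasDerivAt (fun a : ℝ => -d * (1 - a)) d α := by
    simpa using ((hasDerivAt_id α).const_sub 1).const_mul (-d)
  simpa [mul_comm] using h1.exp

lemma phi_hasDeriv (d α : ℝ) :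
    HasDerivAt (phiFn d)
      (d ^ 2 * Real.exp (-d * (1 - α)) * Real.exp (-d * Real.exp (-d * (1 - α)))) α := by
  have h1 := ((hasDerivAt_E d α).const_mul (-d)).exp
  have h2 := h1.const_sub 1
  refine h2.congr_deriv ?_
  ring

lemma Phi_hasDeriv (d α : ℝ) :
    HasDerivAt (PhiFn d)
      (d ^ 2 * Real.exp (-d * (1 - α)) * (phiFn d α - α)) α := by
  have hE := hasDerivAt_E d α
  have h1 := ((hE.const_mul (-d)).exp)
  have h2 : HasDerivAt (fun a : ℝ => (1 + d * (1 - a)) * Real.exp (-d * (1 - a)))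
      ((-d) * Real.exp (-d * (1 - α)) + (1 + d * (1 - α)) * (d * Real.exp (-d * (1 - α)))) α := by
    have hl : HasDerivAt (fun a : ℝ => 1 + d * (1 - a)) (-d) α := by
      simpa using (((hasDerivAt_id α).const_sub 1).const_mul d).const_add 1
    exact hl.mul hE
  have h3 := (h1.add h2).sub_const 1
  refine h3.congr_deriv ?_
  simp only [phiFn]
  ring

lemma H_hasDeriv (d : ℝ) {α : ℝ} (hα : α < 1) :
    HasDerivAt (Hfn d) (d ^ 2 * Real.exp (-d * (1 - α)) - 1 / (1 - α)) α := by
  have hE := (hasDerivAt_E d α).const_mul d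
  have hl : HasDerivAt (fun a : ℝ => Real.log (1 - a)) (-(1 / (1 - α))) α := by
    have h1 : HasDerivAt (fun a : ℝ => 1 - a) (-1) α := by
      simpa using (hasDerivAt_id α).const_sub 1
    have := (Real.hasDerivAt_log (by linarith : (1:ℝ) - α ≠ 0)).comp α h1
    refine this.congr_deriv ?_
    field_simp
  have := hE.add hl
  refine this.congr_deriv ?_
  ring

lemma K_hasDeriv (d x : ℝ) :
    HasDerivAt (Kfn d) (d * Real.exp (d * x) - d ^ 2) x := by
  have h1 : HasDerivAt (fun y : ℝ => d * y) d x := by simpa using (hasDerivAt_id x).const_mul d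
  have h2 := h1.exp
  have h3 : HasDerivAt (fun y : ℝ => d ^ 2 * y) (d ^ 2) x := by
    simpa using (hasDerivAt_id x).const_mul (d ^ 2)
  have := h2.sub h3
  unfold Kfn
  refine this.congr_deriv ?_
  ring

lemma phi_fixed_iff (d : ℝ) {α : ℝ} :
    phiFn d α = α ↔ Real.exp (-d * Real.exp (-d * (1 - α))) = 1 - α := by
  unfold phiFn; constructor <;> intro h <;> linarith

lemma fixed_iff_H (d : ℝ) {α : ℝ} (hα : α < 1) :
    phiFn d α = α ↔ Hfn d α = 0 := by
  rw [phi_fixed_iff]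
  constructor
  · intro h
    have := congrArg Real.log h
    rw [Real.log_exp] at this
    unfold Hfn; linarith
  · intro h
    have hl : Real.log (1 - α) = -d * Real.exp (-d * (1 - α)) := by unfold Hfn at h; linarith
    rw [← hl, Real.exp_log (by linarith)]

lemma phi_one_ne (d : ℝ) : phiFn d 1 ≠ 1 := by
  unfold phiFn
  have := Real.exp_pos (-d * Real.exp (-d * (1 - 1)))
  intro h; linarith

/-- at a fixed point `< 1`, `H > 0 ↔ φ > id`-type sign lemmas -/
lemma phi_gt_of_H_pos (d : ℝ) {α : ℝ} (hα : α < 1) (h : 0 < Hfn d α) : α < phiFn d α := by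
  unfold Hfn at h
  have h2 : Real.log (1 - α) > -d * Real.exp (-d * (1 - α)) := by linarith
  have h3 : Real.exp (-d * Real.exp (-d * (1 - α))) < 1 - α := by
    calc Real.exp (-d * Real.exp (-d * (1 - α))) < Real.exp (Real.log (1 - α)) :=
          Real.exp_lt_exp.mpr h2
    _ = 1 - α := Real.exp_log (by linarith)
  unfold phiFn; linarith

lemma phi_lt_of_H_neg (d : ℝ) {α : ℝ} (hα : α < 1) (h : Hfn d α < 0) : phiFn d α < α := by
  unfold Hfn at h
  have h2 : Real.log (1 - α) < -d * Real.exp (-d * (1 - α)) := by linarith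
  have h3 : 1 - α < Real.exp (-d * Real.exp (-d * (1 - α))) := by
    calc (1:ℝ) - α = Real.exp (Real.log (1 - α)) := (Real.exp_log (by linarith)).symm
    _ < Real.exp (-d * Real.exp (-d * (1 - α))) := Real.exp_lt_exp.mpr h2
  unfold phiFn; linarith

/-- H'(α) sign vs K(1−α): if K(1−α) > 0 then H' < 0. -/
lemma Hderiv_neg_of_K_pos (d : ℝ) {α : ℝ} (hα : α < 1) (hK : 0 < Kfn d (1 - α)) :
    d ^ 2 * Real.exp (-d * (1 - α)) - 1 / (1 - α) < 0 := by
  have hx : (0:ℝ) < 1 - α := by linarith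
  have h1 : d ^ 2 * (1 - α) < Real.exp (d * (1 - α)) := by unfold Kfn at hK; linarith
  have h2 : d ^ 2 * Real.exp (-d * (1 - α)) * (1 - α) < 1 := by
    have he : Real.exp (-d * (1 - α)) = (Real.exp (d * (1 - α)))⁻¹ := by
      rw [← Real.exp_neg]; ring_nf
    rw [he, mul_comm (d ^ 2) _, mul_assoc, inv_mul_lt_iff₀ (Real.exp_pos _)]
    nlinarith [h1]
  rw [sub_neg, lt_div_iff₀ hx]
  linarith

lemma Hderiv_pos_of_K_neg (d : ℝ) {α : ℝ} (hα : α < 1) (hK : Kfn d (1 - α) < 0) :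
    0 < d ^ 2 * Real.exp (-d * (1 - α)) - 1 / (1 - α) := by
  have hx : (0:ℝ) < 1 - α := by linarith
  have h1 : Real.exp (d * (1 - α)) < d ^ 2 * (1 - α) := by unfold Kfn at hK; linarith
  have h2 : 1 < d ^ 2 * Real.exp (-d * (1 - α)) * (1 - α) := by
    have he : Real.exp (-d * (1 - α)) = (Real.exp (d * (1 - α)))⁻¹ := by
      rw [← Real.exp_neg]; ring_nf
    rw [he, mul_comm (d ^ 2) _, mul_assoc, lt_inv_mul_iff₀ (Real.exp_pos _)]
    nlinarith
  rw [sub_pos, div_lt_iff₀ hx]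
  linarith


def fAux (t : ℝ) : ℝ := 1 / t - t + 2 * Real.log t

lemma fAux_hasDeriv {t : ℝ} (ht : 0 < t) :
    HasDerivAt fAux (-(1 / t - 1) ^ 2) t := by
  have h1 : HasDerivAt (fun s : ℝ => 1 / s) (-(1 / t ^ 2)) t := by
    simpa [one_div] using (hasDerivAt_inv ht.ne')
  have h2 : HasDerivAt (fun s : ℝ => 2 * Real.log s) (2 / t) t := by
    simpa [div_eq_mul_inv, mul_comm] using (Real.hasDerivAt_log ht.ne').const_mul 2
  have := (h1.sub (hasDerivAt_id t)).add h2
  unfold fAux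
  refine this.congr_deriv ?_
  field_simp
  ring

lemma fAux_cont : ContinuousOn fAux (Ioi (0:ℝ)) := by
  intro x hx
  exact ((fAux_hasDeriv (mem_Ioi.mp hx)).continuousAt).continuousWithinAt

lemma fAux_pos {t : ℝ} (h0 : 0 < t) (h1 : t < 1) : 0 < fAux t := by
  have hanti : StrictAntiOn fAux (Icc t 1) := by
    apply strictAntiOn_of_deriv_neg (convex_Icc _ _)
    · exact fAux_cont.mono (fun x hx => lt_of_lt_of_le h0 hx.1)
    · intro x hx
      rw [interior_Icc] at hx
      rw [(fAux_hasDeriv (lt_trans h0 hx.1)).deriv]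
      have hne : 1 / x - 1 ≠ 0 := by
        have : 1 < 1 / x := by
          rw [lt_div_iff₀ (lt_trans h0 hx.1)]; linarith [hx.2]
        linarith
      have h2 := pow_pos (abs_pos.mpr hne) 2
      rw [sq_abs] at h2
      linarith
  have := hanti (by simp [h0.le, h1.le] : t ∈ Icc t 1) (by simp [h0.le, h1.le] : (1:ℝ) ∈ Icc t 1) h1
  simpa [fAux] using this

lemma fAux_neg {t : ℝ} (h1 : 1 < t) : fAux t < 0 := by
  have hanti : StrictAntiOn fAux (Icc 1 t) := by
    apply strictAntiOn_of_deriv_neg (convex_Icc _ _)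
    · exact fAux_cont.mono (fun x hx => lt_of_lt_of_le one_pos hx.1)
    · intro x hx
      rw [interior_Icc] at hx
      rw [(fAux_hasDeriv (lt_trans one_pos hx.1)).deriv]
      have hne : 1 / x - 1 ≠ 0 := by
        have hx1 : 1 / x < 1 := by
          rw [div_lt_one (lt_trans one_pos hx.1)]; exact hx.1
        linarith
      have h2 := pow_pos (abs_pos.mpr hne) 2
      rw [sq_abs] at h2
      linarith
  have := hanti (by simp [h1.le] : (1:ℝ) ∈ Icc 1 t) (by simp [h1.le] : t ∈ Icc 1 t) h1
  simpa [fAux] using this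


lemma H_crit_eq {d x : ℝ} (hd : 0 < d) (hx : 0 < x)
    (hK : Real.exp (d * x) = d ^ 2 * x) :
    Hfn d (1 - x) = fAux (d * x) := by
  have hlogx : Real.log x = d * x - 2 * Real.log d := by
    have := congrArg Real.log hK
    rw [Real.log_exp, Real.log_mul (by positivity) hx.ne', Real.log_pow] at this
    push_cast at this
    linarith
  have hexp : Real.exp (-(d * x)) = 1 / (d ^ 2 * x) := by
    rw [Real.exp_neg, hK, one_div]
  unfold Hfn fAux
  rw [show (1 : ℝ) - (1 - x) = x by ring, show -d * x = -(d*x) by ring, hexp,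
    Real.log_mul hd.ne' hx.ne', hlogx]
  field_simp
  ring

lemma Hcont (d : ℝ) : ContinuousOn (Hfn d) (Iio (1:ℝ)) :=
  fun x hx => ((H_hasDeriv d hx).continuousAt).continuousWithinAt

lemma Phi_cont (d : ℝ) : Continuous (PhiFn d) :=
  Differentiable.continuous (fun α => (Phi_hasDeriv d α).differentiableAt)

lemma K_cont (d : ℝ) : Continuous (Kfn d) :=
  Differentiable.continuous (fun x => (K_hasDeriv d x).differentiableAt)

/-- fixed point products: if `K d x > 0` (and `x > 0`) then `d² e^{-dx} x < 1`. -/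
lemma prod_lt_one_of_K_pos {d x : ℝ} (hx : 0 < x) (hK : 0 < Kfn d x) :
    d ^ 2 * Real.exp (-d * x) * x < 1 := by
  have h1 : d ^ 2 * x < Real.exp (d * x) := by unfold Kfn at hK; linarith
  have hE : Real.exp (-d * x) * Real.exp (d * x) = 1 := by
    rw [← Real.exp_add]; ring_nf; exact Real.exp_zero
  nlinarith [Real.exp_pos (-d * x), mul_pos (sub_pos.mpr h1) (Real.exp_pos (-d * x))]

lemma one_lt_prod_of_K_neg {d x : ℝ} (hx : 0 < x) (hK : Kfn d x < 0) :
    1 < d ^ 2 * Real.exp (-d * x) * x := by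
  have h1 : Real.exp (d * x) < d ^ 2 * x := by unfold Kfn at hK; linarith
  have hE : Real.exp (-d * x) * Real.exp (d * x) = 1 := by
    rw [← Real.exp_add]; ring_nf; exact Real.exp_zero
  nlinarith [Real.exp_pos (-d * x), mul_pos (sub_pos.mpr h1) (Real.exp_pos (-d * x))]

/-- Packaged structure of the three fixed points when `d > e`. -/
lemma exists_three (d : ℝ) (hd : Real.exp 1 < d) :
    ∃ r1 r2 α₁ α₂ α₃ : ℝ,
      (0 < r1 ∧ r1 < r2 ∧ r2 < 1) ∧
      (∀ x, 0 < x → x < r1 → 0 < Kfn d x) ∧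
      (∀ x, r1 < x → x < r2 → Kfn d x < 0) ∧
      (∀ x, r2 < x → x ≤ 1 → 0 < Kfn d x) ∧
      (Kfn d r1 = 0 ∧ Kfn d r2 = 0) ∧
      StrictAntiOn (Hfn d) (Icc 0 (1 - r2)) ∧
      StrictMonoOn (Hfn d) (Icc (1 - r2) (1 - r1)) ∧
      StrictAntiOn (Hfn d) (Ico (1 - r1) 1) ∧
      (α₁ ∈ Ioo 0 (1 - r2) ∧ Hfn d α₁ = 0) ∧
      (α₂ ∈ Ioo (1 - r2) (1 - r1) ∧ Hfn d α₂ = 0) ∧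
      (α₃ ∈ Ioo (1 - r1) 1 ∧ Hfn d α₃ = 0) := by
  have he : (0:ℝ) < Real.exp 1 := Real.exp_pos 1
  have hd0 : (0:ℝ) < d := lt_trans he hd
  have hd1 : (1:ℝ) < d := lt_trans (by nlinarith [Real.add_one_le_exp (1:ℝ)]) hd
  have hlogd : 1 < Real.log d := by
    have := Real.log_lt_log he hd
    rwa [Real.log_exp] at this
  set m : ℝ := Real.log d / d with hm_def
  have hm0 : 0 < m := div_pos (by linarith) hd0
  have hm1 : m < 1 := by
    rw [div_lt_one hd0]
    linarith [Real.log_le_sub_one_of_pos hd0]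
  have hdm : d * m = Real.log d := by rw [hm_def]; field_simp
  -- derivative sign of K
  have hKderiv_neg : ∀ x ∈ Ioo (0:ℝ) m, deriv (Kfn d) x < 0 := by
    intro x hx
    rw [(K_hasDeriv d x).deriv]
    have : Real.exp (d * x) < d := by
      calc Real.exp (d * x) < Real.exp (Real.log d) := by
            apply Real.exp_lt_exp.mpr
            rw [← hdm]
            exact (mul_lt_mul_iff_right₀ hd0).mpr hx.2
      _ = d := Real.exp_log hd0
    nlinarith
  have hKderiv_pos : ∀ x ∈ Ioo m (1:ℝ), 0 < deriv (Kfn d) x := by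
    intro x hx
    rw [(K_hasDeriv d x).deriv]
    have : d < Real.exp (d * x) := by
      calc d = Real.exp (Real.log d) := (Real.exp_log hd0).symm
      _ < Real.exp (d * x) := by
            apply Real.exp_lt_exp.mpr
            rw [← hdm]
            exact (mul_lt_mul_iff_right₀ hd0).mpr hx.1
    nlinarith
  have hKanti : StrictAntiOn (Kfn d) (Icc 0 m) := by
    apply strictAntiOn_of_deriv_neg (convex_Icc _ _) (K_cont d).continuousOn
    rw [interior_Icc]; exact hKderiv_neg
  have hKmono : StrictMonoOn (Kfn d) (Icc m 1) := by
    apply strictMonoOn_of_deriv_pos (convex_Icc _ _) (K_cont d).continuousOn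
    rw [interior_Icc]; exact hKderiv_pos
  -- values of K
  have hK0 : Kfn d 0 = 1 := by simp [Kfn]
  have hKm : Kfn d m < 0 := by
    unfold Kfn
    rw [hdm, Real.exp_log hd0, hm_def]
    rw [show d ^ 2 * (Real.log d / d) = d * Real.log d by field_simp]
    nlinarith
  have hK1 : 0 < Kfn d 1 := by
    unfold Kfn
    have hs : Real.sqrt d ^ 2 = d := Real.sq_sqrt hd0.le
    have hs1 : 1 < Real.sqrt d := by nlinarith [Real.sqrt_nonneg d]
    have hlog : Real.log d = 2 * Real.log (Real.sqrt d) := by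
      rw [← hs, Real.log_pow]; norm_num
    have h2 : Real.log (Real.sqrt d) < Real.sqrt d - 1 :=
      Real.log_lt_sub_one_of_pos (by linarith) (by linarith)
    have h3 : 2 * Real.log d < d := by
      rw [hlog]
      nlinarith [sq_nonneg (Real.sqrt d - 2)]
    have h4 : d ^ 2 = Real.exp (2 * Real.log d) := by
      rw [two_mul, Real.exp_add, Real.exp_log hd0]; ring
    rw [mul_one, h4]
    nlinarith [Real.exp_lt_exp.mpr h3]
  -- the two zeros of K
  obtain ⟨r1, hr1mem, hr1⟩ : ∃ r1 ∈ Ioo (0:ℝ) m, Kfn d r1 = 0 := by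
    have := intermediate_value_Ioo' hm0.le (K_cont d).continuousOn (a := 0) (b := m)
    have h0 : (0:ℝ) ∈ Ioo (Kfn d m) (Kfn d 0) := by rw [hK0]; exact ⟨hKm, one_pos⟩
    obtain ⟨r1, hmem, hval⟩ := this h0
    exact ⟨r1, hmem, hval⟩
  obtain ⟨r2, hr2mem, hr2⟩ : ∃ r2 ∈ Ioo m (1:ℝ), Kfn d r2 = 0 := by
    have := intermediate_value_Ioo hm1.le (K_cont d).continuousOn (a := m) (b := 1)
    have h0 : (0:ℝ) ∈ Ioo (Kfn d m) (Kfn d 1) := ⟨hKm, hK1⟩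
    obtain ⟨r2, hmem, hval⟩ := this h0
    exact ⟨r2, hmem, hval⟩
  have hr10 : 0 < r1 := hr1mem.1
  have hr1m : r1 < m := hr1mem.2
  have hr2m : m < r2 := hr2mem.1
  have hr21 : r2 < 1 := hr2mem.2
  have hr12 : r1 < r2 := lt_trans hr1m hr2m
  -- K sign lemmas
  have Kpos_lo : ∀ x, 0 < x → x < r1 → 0 < Kfn d x := by
    intro x hx0 hxr
    have := hKanti ⟨hx0.le, by linarith⟩ ⟨hr10.le, hr1m.le⟩ hxr
    rw [hr1] at this; exact this
  have Kpos_hi : ∀ x, r2 < x → x ≤ 1 → 0 < Kfn d x := by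
    intro x hxr hx1
    have := hKmono ⟨hr2m.le, hr21.le⟩ ⟨by linarith, hx1⟩ hxr
    rw [hr2] at this; exact this
  have Kneg_mid : ∀ x, r1 < x → x < r2 → Kfn d x < 0 := by
    intro x hxr hxr2
    rcases le_or_gt x m with hxm | hxm
    · have := hKanti ⟨hr10.le, hr1m.le⟩ ⟨by linarith, hxm⟩ hxr
      rw [hr1] at this; exact this
    · have := hKmono ⟨hxm.le, by linarith⟩ ⟨hr2m.le, hr21.le⟩ hxr2
      rw [hr2] at this; exact this
  -- r1 < 1/d < r2
  have hKinv : Kfn d (1 / d) < 0 := by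
    unfold Kfn
    rw [mul_one_div, div_self hd0.ne']
    have : d ^ 2 * (1 / d) = d := by field_simp
    rw [this]; linarith
  have hinv0 : 0 < 1 / d := by positivity
  have hdr1 : d * r1 < 1 := by
    by_contra h
    push_neg at h
    have h1d : 1 / d ≤ r1 := by rw [div_le_iff₀ hd0]; linarith [h]
    rcases eq_or_lt_of_le h1d with he' | hlt
    · rw [← he'] at hr1; linarith
    · linarith [Kpos_lo _ hinv0 hlt]
  have hdr2 : 1 < d * r2 := by
    by_contra h
    push_neg at h
    have h1d : r2 ≤ 1 / d := by rw [le_div_iff₀ hd0]; linarith [h]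
    rcases eq_or_lt_of_le h1d with he' | hlt
    · rw [he'] at hr2; linarith
    · have : (1:ℝ)/d ≤ 1 := by rw [div_le_one hd0]; linarith
      linarith [Kpos_hi _ hlt this]
  -- H values at critical points
  have hHr1 : 0 < Hfn d (1 - r1) := by
    rw [H_crit_eq hd0 hr10 (by unfold Kfn at hr1; linarith)]
    exact fAux_pos (by positivity) hdr1
  have hHr2 : Hfn d (1 - r2) < 0 := by
    rw [H_crit_eq hd0 (by linarith : (0:ℝ) < r2) (by unfold Kfn at hr2; linarith)]
    exact fAux_neg hdr2
  have hH0 : 0 < Hfn d 0 := by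
    unfold Hfn
    simp only [sub_zero, Real.log_one, add_zero, mul_one]
    positivity
  -- point near 1 where H < 0
  set x₀ : ℝ := min (Real.exp (-(2*d))) (r1/2) with hx₀_def
  have hx₀0 : 0 < x₀ := lt_min (Real.exp_pos _) (by linarith)
  have hx₀r1 : x₀ < r1 := lt_of_le_of_lt (min_le_right _ _) (by linarith)
  have hx₀1 : x₀ < 1 := by linarith [hr1m, hm1]
  have hHx₀ : Hfn d (1 - x₀) < 0 := by
    unfold Hfn
    rw [show (1:ℝ) - (1 - x₀) = x₀ by ring]
    have h1 : Real.exp (-d * x₀) ≤ 1 := Real.exp_le_one_iff.mpr (by nlinarith)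
    have h2 : Real.log x₀ ≤ -(2*d) := by
      calc Real.log x₀ ≤ Real.log (Real.exp (-(2*d))) :=
            Real.log_le_log hx₀0 (min_le_left _ _)
      _ = -(2*d) := Real.log_exp _
    nlinarith
  -- H monotonicity on the three intervals
  have HAnti1 : StrictAntiOn (Hfn d) (Icc 0 (1 - r2)) := by
    apply strictAntiOn_of_deriv_neg (convex_Icc _ _)
      ((Hcont d).mono (fun y hy => mem_Iio.mpr (by cases hy; linarith)))
    intro y hy
    rw [interior_Icc] at hy
    have hy1 : y < 1 := by linarith [hy.2]
    rw [(H_hasDeriv d hy1).deriv]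
    exact Hderiv_neg_of_K_pos d hy1 (Kpos_hi _ (by linarith [hy.2]) (by linarith [hy.1]))
  have HMono : StrictMonoOn (Hfn d) (Icc (1 - r2) (1 - r1)) := by
    apply strictMonoOn_of_deriv_pos (convex_Icc _ _)
      ((Hcont d).mono (fun y hy => mem_Iio.mpr (by cases hy; linarith)))
    intro y hy
    rw [interior_Icc] at hy
    have hy1 : y < 1 := by linarith [hy.2]
    rw [(H_hasDeriv d hy1).deriv]
    exact Hderiv_pos_of_K_neg d hy1 (Kneg_mid _ (by linarith [hy.2]) (by linarith [hy.1]))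
  have HAnti2 : StrictAntiOn (Hfn d) (Ico (1 - r1) 1) := by
    apply strictAntiOn_of_deriv_neg (convex_Ico _ _)
      ((Hcont d).mono (fun y hy => hy.2))
    intro y hy
    rw [interior_Ico] at hy
    have hy1 : y < 1 := hy.2
    rw [(H_hasDeriv d hy1).deriv]
    exact Hderiv_neg_of_K_pos d hy1 (Kpos_lo _ (by linarith [hy.2]) (by linarith [hy.1]))
  -- the three zeros
  obtain ⟨α₁, hα₁mem, hα₁⟩ : ∃ α₁ ∈ Ioo (0:ℝ) (1 - r2), Hfn d α₁ = 0 := by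
    have hcont : ContinuousOn (Hfn d) (Icc 0 (1 - r2)) :=
      (Hcont d).mono (fun y hy => mem_Iio.mpr (by cases hy; linarith))
    have := intermediate_value_Ioo' (by linarith : (0:ℝ) ≤ 1 - r2) hcont
    obtain ⟨x, hmem, hval⟩ := this ⟨hHr2, hH0⟩
    exact ⟨x, hmem, hval⟩
  obtain ⟨α₂, hα₂mem, hα₂⟩ : ∃ α₂ ∈ Ioo (1 - r2) (1 - r1), Hfn d α₂ = 0 := by
    have hcont : ContinuousOn (Hfn d) (Icc (1 - r2) (1 - r1)) :=
      (Hcont d).mono (fun y hy => mem_Iio.mpr (by cases hy; linarith))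
    have := intermediate_value_Ioo (by linarith : 1 - r2 ≤ 1 - r1) hcont
    obtain ⟨x, hmem, hval⟩ := this ⟨hHr2, hHr1⟩
    exact ⟨x, hmem, hval⟩
  obtain ⟨α₃, hα₃mem, hα₃⟩ : ∃ α₃ ∈ Ioo (1 - r1) 1, Hfn d α₃ = 0 := by
    have hcont : ContinuousOn (Hfn d) (Icc (1 - r1) (1 - x₀)) :=
      (Hcont d).mono (fun y hy => mem_Iio.mpr (by cases hy; linarith))
    have := intermediate_value_Ioo' (by linarith : 1 - r1 ≤ 1 - x₀) hcont
    obtain ⟨x, hmem, hval⟩ := this ⟨hHx₀, hHr1⟩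
    exact ⟨x, ⟨hmem.1, by linarith [hmem.2]⟩, hval⟩
  exact ⟨r1, r2, α₁, α₂, α₃, ⟨hr10, hr12, hr21⟩, Kpos_lo, Kneg_mid, Kpos_hi, ⟨hr1, hr2⟩,
    HAnti1, HMono, HAnti2, ⟨hα₁mem, hα₁⟩, ⟨hα₂mem, hα₂⟩, ⟨hα₃mem, hα₃⟩⟩

set_option maxHeartbeats 1000000 in
lemma main_gt (d : ℝ) (hd : Real.exp 1 < d) :
      0 < alphaMin d ∧ alphaMin d < alphaMid d ∧ alphaMid d < alphaMax d ∧ alphaMax d < 1 ∧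
      {α : ℝ | α ∈ Set.Icc (0:ℝ) 1 ∧ phiFn d α = α} =
        {alphaMin d, alphaMid d, alphaMax d} ∧
      deriv (phiFn d) (alphaMin d) < 1 ∧
      deriv (phiFn d) (alphaMax d) < 1 ∧
      1 ≤ deriv (phiFn d) (alphaMid d) ∧
      PhiFn d (alphaMin d) = PhiFn d (alphaMax d) ∧
      (∀ α ∈ Set.Icc (0:ℝ) 1, α ≠ alphaMin d → α ≠ alphaMax d →
        PhiFn d α < PhiFn d (alphaMin d)) ∧
      1 - alphaMid d = Real.exp (-d * (1 - alphaMid d)) := by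
  obtain ⟨r1, r2, α₁, α₂, α₃, ⟨hr10, hr12, hr21⟩, Kpos_lo, Kneg_mid, Kpos_hi, ⟨hKr1, hKr2⟩,
    HAnti1, HMono, HAnti2, ⟨hα₁mem, hα₁⟩, ⟨hα₂mem, hα₂⟩, ⟨hα₃mem, hα₃⟩⟩ := exists_three d hd
  have hd0 : (0:ℝ) < d := lt_trans (Real.exp_pos 1) hd
  have hr20 : 0 < r2 := lt_trans hr10 hr12
  have hα₁0 : 0 < α₁ := hα₁mem.1
  have hα₁r2 : α₁ < 1 - r2 := hα₁mem.2
  have hα₂lo : 1 - r2 < α₂ := hα₂mem.1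
  have hα₂hi : α₂ < 1 - r1 := hα₂mem.2
  have hα₃lo : 1 - r1 < α₃ := hα₃mem.1
  have hα₃1 : α₃ < 1 := hα₃mem.2
  have hα₁1 : α₁ < 1 := by linarith
  have hα₂1 : α₂ < 1 := by linarith
  have hα12 : α₁ < α₂ := by linarith
  have hα23 : α₂ < α₃ := by linarith
  -- the three are fixed points
  have hfix1 : phiFn d α₁ = α₁ := (fixed_iff_H d hα₁1).mpr hα₁
  have hfix2 : phiFn d α₂ = α₂ := (fixed_iff_H d hα₂1).mpr hα₂
  have hfix3 : phiFn d α₃ = α₃ := (fixed_iff_H d hα₃1).mpr hα₃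
  -- classification of fixed points
  have hclass : ∀ α, α ∈ Set.Icc (0:ℝ) 1 → phiFn d α = α → α = α₁ ∨ α = α₂ ∨ α = α₃ := by
    intro α hαmem hαfix
    have hαlt1 : α < 1 := lt_of_le_of_ne hαmem.2 (fun h => phi_one_ne d (h ▸ hαfix))
    have hH : Hfn d α = 0 := (fixed_iff_H d hαlt1).mp hαfix
    rcases le_or_gt α (1 - r2) with h1 | h1
    · left
      exact HAnti1.injOn ⟨hαmem.1, h1⟩ ⟨hα₁0.le, hα₁r2.le⟩ (by rw [hH, hα₁])
    · rcases le_or_gt α (1 - r1) with h2 | h2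
      · right; left
        exact HMono.injOn ⟨h1.le, h2⟩ ⟨hα₂lo.le, hα₂hi.le⟩ (by rw [hH, hα₂])
      · right; right
        exact HAnti2.injOn ⟨h2.le, hαlt1⟩ ⟨hα₃lo.le, hα₃1⟩ (by rw [hH, hα₃])
  have hmem1 : α₁ ∈ Set.Icc (0:ℝ) 1 := ⟨hα₁0.le, hα₁1.le⟩
  have hmem2 : α₂ ∈ Set.Icc (0:ℝ) 1 := ⟨by linarith, hα₂1.le⟩
  have hmem3 : α₃ ∈ Set.Icc (0:ℝ) 1 := ⟨by linarith, hα₃1.le⟩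
  have hset : {α : ℝ | α ∈ Set.Icc (0:ℝ) 1 ∧ phiFn d α = α} = {α₁, α₂, α₃} := by
    ext α
    simp only [Set.mem_setOf_eq, Set.mem_insert_iff, Set.mem_singleton_iff]
    constructor
    · rintro ⟨h1, h2⟩; exact hclass α h1 h2
    · rintro (rfl | rfl | rfl)
      · exact ⟨hmem1, hfix1⟩
      · exact ⟨hmem2, hfix2⟩
      · exact ⟨hmem3, hfix3⟩
  -- identify alphaMin, alphaMax, alphaMid
  have hMin : alphaMin d = α₁ := by
    rw [alphaMin, hset]
    apply IsLeast.csInf_eq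
    constructor
    · left; rfl
    · rintro y (rfl | rfl | rfl) <;> linarith
  have hMax : alphaMax d = α₃ := by
    rw [alphaMax, hset]
    apply IsGreatest.csSup_eq
    constructor
    · right; right; rfl
    · rintro y (rfl | rfl | rfl) <;> linarith
  have hMid : alphaMid d = α₂ := by
    rw [alphaMid, if_neg (not_le.mpr hd), hMin, hMax]
    have : {α : ℝ | α ∈ Set.Ioo α₁ α₃ ∧ phiFn d α = α} = {α₂} := by
      ext α
      simp only [Set.mem_setOf_eq, Set.mem_singleton_iff]
      constructor
      · rintro ⟨h1, h2⟩
        rcases hclass α ⟨by linarith [h1.1], by linarith [h1.2]⟩ h2 with rfl | rfl | rfl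
        · exact absurd h1.1 (lt_irrefl _)
        · rfl
        · exact absurd h1.2 (lt_irrefl _)
      · rintro rfl
        exact ⟨⟨hα12, hα23⟩, hfix2⟩
    rw [this, csInf_singleton]
  -- ψ has unique fixed point p = 1 - α₂
  have hψuniq : ∀ q q' : ℝ, Real.exp (-d * q) = q → Real.exp (-d * q') = q' → q = q' := by
    intro q q' h h'
    rcases lt_trichotomy q q' with hlt | heq | hlt
    · have : Real.exp (-d * q') < Real.exp (-d * q) := Real.exp_lt_exp.mpr (by nlinarith)
      rw [h, h'] at this; linarith
    · exact heq
    · have : Real.exp (-d * q) < Real.exp (-d * q') := Real.exp_lt_exp.mpr (by nlinarith)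
      rw [h, h'] at this; linarith
  obtain ⟨p, hpmem, hp⟩ : ∃ p ∈ Ioo (0:ℝ) 1, Real.exp (-d * p) = p := by
    have hcont : ContinuousOn (fun x : ℝ => Real.exp (-d * x) - x) (Icc 0 1) := by
      exact ((Real.continuous_exp.comp (continuous_const.mul continuous_id)).sub
        continuous_id).continuousOn
    have h0 : (fun x : ℝ => Real.exp (-d * x) - x) 0 = 1 := by simp
    have h1 : (fun x : ℝ => Real.exp (-d * x) - x) 1 < 0 := by
      simp only []
      have : Real.exp (-d * 1) < 1 := Real.exp_lt_one_iff.mpr (by linarith)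
      linarith
    have := intermediate_value_Ioo' (by norm_num : (0:ℝ) ≤ 1) hcont
      (a := 0) (b := 1) ⟨h1, by norm_num⟩
    obtain ⟨p, hmem, hval⟩ := this
    exact ⟨p, hmem, by dsimp only at hval; linarith⟩
  have hdp1 : 1 < d * p := by
    by_contra h
    push_neg at h
    have h1 : Real.exp (-1:ℝ) ≤ Real.exp (-d * p) := Real.exp_le_exp.mpr (by nlinarith)
    rw [hp] at h1
    have h2 : d * Real.exp (-1:ℝ) ≤ d * p := by nlinarith
    have h3 : 1 < d * Real.exp (-1:ℝ) := by
      rw [Real.exp_neg, ← Real.exp_log (Real.exp_pos 1)]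
      rw [Real.log_exp]
      have : Real.exp 1 * (Real.exp 1)⁻¹ = 1 := mul_inv_cancel₀ (Real.exp_pos 1).ne'
      nlinarith [Real.exp_pos 1, (inv_pos.mpr (Real.exp_pos 1))]
    linarith
  have hKp : Kfn d p < 0 := by
    unfold Kfn
    have hexp : Real.exp (d * p) = 1 / p := by
      have h' : Real.exp (d * p) * Real.exp (-d * p) = 1 := by
        rw [← Real.exp_add]; ring_nf; exact Real.exp_zero
      rw [hp] at h'
      rw [eq_div_iff hpmem.1.ne']
      exact h'
    rw [hexp]
    have hp0 : 0 < p := hpmem.1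
    rw [div_sub' hp0.ne', div_neg_iff]
    right
    constructor
    · nlinarith
    · exact hp0
  have hpr : r1 < p ∧ p < r2 := by
    constructor
    · by_contra h
      push_neg at h
      rcases eq_or_lt_of_le h with he' | hlt
      · rw [← he'] at hKr1; linarith
      · linarith [Kpos_lo p hpmem.1 hlt]
    · by_contra h
      push_neg at h
      rcases eq_or_lt_of_le h with he' | hlt
      · rw [he'] at hKr2; linarith
      · linarith [Kpos_hi p hlt hpmem.2.le]
  have hα₂p : α₂ = 1 - p := by
    have hHp : Hfn d (1 - p) = 0 := by
      unfold Hfn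
      rw [show (1:ℝ) - (1 - p) = p by ring, hp, ← hp, Real.log_exp, hp]
      ring
    exact HMono.injOn ⟨hα₂lo.le, hα₂hi.le⟩
      ⟨by linarith [hpr.2], by linarith [hpr.1]⟩ (by rw [hα₂, hHp])
  -- derivative of φ at fixed points
  have hderiv_fix : ∀ α, phiFn d α = α →
      deriv (phiFn d) α = d ^ 2 * Real.exp (-d * (1 - α)) * (1 - α) := by
    intro α hfix
    rw [(phi_hasDeriv d α).deriv, (phi_fixed_iff d).mp hfix]
  have hder1 : deriv (phiFn d) α₁ < 1 := by
    rw [hderiv_fix α₁ hfix1]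
    exact prod_lt_one_of_K_pos (by linarith) (Kpos_hi _ (by linarith) (by linarith))
  have hder3 : deriv (phiFn d) α₃ < 1 := by
    rw [hderiv_fix α₃ hfix3]
    exact prod_lt_one_of_K_pos (by linarith) (Kpos_lo _ (by linarith) (by linarith))
  have hder2 : 1 ≤ deriv (phiFn d) α₂ := by
    rw [hderiv_fix α₂ hfix2]
    apply le_of_lt
    apply one_lt_prod_of_K_neg (by linarith)
    rw [hα₂p, show (1:ℝ) - (1 - p) = p by ring]
    exact hKp
  -- the 2-cycle structure : exp(-d(1-α₁)) = 1-α₃ and vice versa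
  have hb : Real.exp (-d * Real.exp (-d * (1 - α₁))) = 1 - α₁ := (phi_fixed_iff d).mp hfix1
  have ha' : Real.exp (-d * Real.exp (-d * (1 - α₃))) = 1 - α₃ := (phi_fixed_iff d).mp hfix3
  set β : ℝ := 1 - Real.exp (-d * (1 - α₁)) with hβ_def
  have h1β : 1 - β = Real.exp (-d * (1 - α₁)) := by rw [hβ_def]; ring
  have hβfix : phiFn d β = β := by
    have h2 : Real.exp (-d * (1 - β)) = 1 - α₁ := by rw [h1β]; exact hb
    unfold phiFn
    rw [h2, ← h1β]
    ring
  have hβmem : β ∈ Set.Icc (0:ℝ) 1 := by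
    have hE1 : Real.exp (-d * (1 - α₁)) < 1 := Real.exp_lt_one_iff.mpr (by nlinarith)
    have hE0 : 0 < Real.exp (-d * (1 - α₁)) := Real.exp_pos _
    exact ⟨by rw [hβ_def]; linarith, by rw [hβ_def]; linarith⟩
  have hψb : Real.exp (-d * (1 - α₁)) = 1 - α₃ := by
    rcases hclass β hβmem hβfix with h | h | h
    · exfalso
      have hq : Real.exp (-d * (1 - α₁)) = 1 - α₁ := by rw [hβ_def] at h; linarith
      have := hψuniq (1 - α₁) p hq hp
      rw [hα₂p] at hα12; linarith
    · exfalso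
      have hq : Real.exp (-d * (1 - α₁)) = p := by rw [hβ_def] at h; rw [hα₂p] at h; linarith
      have h1 : Real.exp (-d * p) = 1 - α₁ := by rw [← hq]; exact hb
      rw [hp] at h1
      rw [hα₂p] at hα12; linarith
    · rw [hβ_def] at h; linarith
  have hψa : Real.exp (-d * (1 - α₃)) = 1 - α₁ := by
    rw [← hψb]; exact hb
  -- Φ equality
  have hPhi : PhiFn d α₁ = PhiFn d α₃ := by
    unfold PhiFn
    rw [hb, ha', hψb, hψa]
    ring
  -- sign of H between the fixed points
  have Hpos_a : ∀ α, 0 ≤ α → α < α₁ → 0 < Hfn d α := by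
    intro α h0 h1
    have := HAnti1 ⟨h0, by linarith⟩ ⟨hα₁0.le, hα₁r2.le⟩ h1
    rw [hα₁] at this; exact this
  have Hneg_ab : ∀ α, α₁ < α → α < α₂ → Hfn d α < 0 := by
    intro α h1 h2
    rcases le_or_gt α (1 - r2) with h3 | h3
    · have := HAnti1 ⟨hα₁0.le, hα₁r2.le⟩ ⟨by linarith, h3⟩ h1
      rw [hα₁] at this; exact this
    · have := HMono ⟨h3.le, by linarith⟩ ⟨hα₂lo.le, hα₂hi.le⟩ h2
      rw [hα₂] at this; exact this
  have Hpos_bc : ∀ α, α₂ < α → α < α₃ → 0 < Hfn d α := by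
    intro α h1 h2
    rcases le_or_gt α (1 - r1) with h3 | h3
    · have := HMono ⟨hα₂lo.le, hα₂hi.le⟩ ⟨by linarith, h3⟩ h1
      rw [hα₂] at this; exact this
    · have := HAnti2 ⟨h3.le, by linarith⟩ ⟨hα₃lo.le, hα₃1⟩ h2
      rw [hα₃] at this; exact this
  have Hneg_c : ∀ α, α₃ < α → α < 1 → Hfn d α < 0 := by
    intro α h1 h2
    have := HAnti2 ⟨hα₃lo.le, hα₃1⟩ ⟨by linarith, h2⟩ h1
    rw [hα₃] at this; exact this
  -- Φ monotonicity on the four intervals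
  have hd2 : (0:ℝ) < d ^ 2 := by positivity
  have PhiMono1 : StrictMonoOn (PhiFn d) (Icc 0 α₁) := by
    apply strictMonoOn_of_deriv_pos (convex_Icc _ _) (Phi_cont d).continuousOn
    rw [interior_Icc]
    intro z hz
    rw [(Phi_hasDeriv d z).deriv]
    exact mul_pos (mul_pos hd2 (Real.exp_pos _))
      (sub_pos.mpr (phi_gt_of_H_pos d (by linarith [hz.2]) (Hpos_a z hz.1.le hz.2)))
  have PhiAnti1 : StrictAntiOn (PhiFn d) (Icc α₁ α₂) := by
    apply strictAntiOn_of_deriv_neg (convex_Icc _ _) (Phi_cont d).continuousOn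
    rw [interior_Icc]
    intro z hz
    rw [(Phi_hasDeriv d z).deriv]
    exact mul_neg_of_pos_of_neg (mul_pos hd2 (Real.exp_pos _))
      (sub_neg.mpr (phi_lt_of_H_neg d (by linarith [hz.2]) (Hneg_ab z hz.1 hz.2)))
  have PhiMono2 : StrictMonoOn (PhiFn d) (Icc α₂ α₃) := by
    apply strictMonoOn_of_deriv_pos (convex_Icc _ _) (Phi_cont d).continuousOn
    rw [interior_Icc]
    intro z hz
    rw [(Phi_hasDeriv d z).deriv]
    exact mul_pos (mul_pos hd2 (Real.exp_pos _))
      (sub_pos.mpr (phi_gt_of_H_pos d (by linarith [hz.2]) (Hpos_bc z hz.1 hz.2)))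
  have PhiAnti2 : StrictAntiOn (PhiFn d) (Icc α₃ 1) := by
    apply strictAntiOn_of_deriv_neg (convex_Icc _ _) (Phi_cont d).continuousOn
    rw [interior_Icc]
    intro z hz
    rw [(Phi_hasDeriv d z).deriv]
    exact mul_neg_of_pos_of_neg (mul_pos hd2 (Real.exp_pos _))
      (sub_neg.mpr (phi_lt_of_H_neg d hz.2 (Hneg_c z hz.1 hz.2)))
  have hmax : ∀ α ∈ Set.Icc (0:ℝ) 1, α ≠ α₁ → α ≠ α₃ → PhiFn d α < PhiFn d α₁ := by
    intro α hα hne1 hne3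
    rcases lt_or_gt_of_ne hne1 with h | h
    · exact PhiMono1 ⟨hα.1, h.le⟩ ⟨hα₁0.le, le_refl _⟩ h
    · rcases le_or_gt α α₂ with h2 | h2
      · exact PhiAnti1 ⟨le_refl _, hα12.le⟩ ⟨h.le, h2⟩ h
      · rcases lt_trichotomy α α₃ with h3 | h3 | h3
        · rw [hPhi]
          exact PhiMono2 ⟨h2.le, h3.le⟩ ⟨hα23.le, le_refl _⟩ h3
        · exact absurd h3 hne3
        · rw [hPhi]
          exact PhiAnti2 ⟨le_refl _, hα₃1.le⟩ ⟨h3.le, hα.2⟩ h3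
  refine ⟨?_, ?_, ?_, ?_, ?_, ?_, ?_, ?_, ?_, ?_, ?_⟩
  · rw [hMin]; exact hα₁0
  · rw [hMin, hMid]; exact hα12
  · rw [hMid, hMax]; exact hα23
  · rw [hMax]; exact hα₃1
  · rw [hMin, hMid, hMax]; exact hset
  · rw [hMin]; exact hder1
  · rw [hMax]; exact hder3
  · rw [hMid]; exact hder2
  · rw [hMin, hMax]; exact hPhi
  · rw [hMin, hMax]
    intro α h1 h2 h3
    exact hmax α h1 h2 h3
  · rw [hMid, hα₂p, show (1:ℝ) - (1 - p) = p by ring]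
    exact hp.symm

set_option maxHeartbeats 1000000 in
lemma main_le (d : ℝ) (hd0 : 0 < d) (hde : d ≤ Real.exp 1) :
    (∃! α : ℝ, α ∈ Set.Icc (0:ℝ) 1 ∧ phiFn d α = α) ∧
    (∀ α ∈ Set.Icc (0:ℝ) 1, phiFn d α = α →
      ∀ β ∈ Set.Icc (0:ℝ) 1, β ≠ α → PhiFn d β < PhiFn d α) := by
  -- K is positive away from 1/d
  have Ksign : ∀ x : ℝ, 0 < x → x ≠ 1 / d → 0 < Kfn d x := by
    intro x hx hne
    unfold Kfn
    have ht : 0 < d * x := mul_pos hd0 hx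
    have h1 : d * x ≠ 1 := by
      intro hc
      exact hne (by field_simp [eq_comm]; linarith [hc])
    have h3 := Real.add_one_lt_exp (show d * x - 1 ≠ 0 by intro hc; exact h1 (by linarith))
    have h4 : Real.exp (d * x - 1) * Real.exp 1 = Real.exp (d * x) := by
      rw [← Real.exp_add]; ring_nf
    have h5 : Real.exp 1 * (d * x) < Real.exp (d * x) := by
      nlinarith [Real.exp_pos 1]
    have h6 : d * (d * x) ≤ Real.exp 1 * (d * x) := mul_le_mul_of_nonneg_right hde ht.le
    nlinarith
  -- H is strictly decreasing on [0,1)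
  have piece : ∀ u v : ℝ, 0 ≤ u → u < v → v < 1 →
      (∀ z ∈ Ioo u v, z ≠ 1 - 1 / d) → Hfn d v < Hfn d u := by
    intro u v hu huv hv hz
    have hanti : StrictAntiOn (Hfn d) (Icc u v) := by
      apply strictAntiOn_of_deriv_neg (convex_Icc _ _)
        ((Hcont d).mono (fun y hy => mem_Iio.mpr (by cases hy; linarith)))
      rw [interior_Icc]
      intro z hzmem
      have hz1 : z < 1 := by linarith [hzmem.2]
      rw [(H_hasDeriv d hz1).deriv]
      apply Hderiv_neg_of_K_pos d hz1
      apply Ksign _ (by linarith)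
      intro hc
      exact (hz z hzmem) (by linarith)
    exact hanti ⟨le_refl u, huv.le⟩ ⟨huv.le, le_refl v⟩ huv
  have Hanti : ∀ u v : ℝ, u ∈ Ico (0:ℝ) 1 → v ∈ Ico (0:ℝ) 1 → u < v → Hfn d v < Hfn d u := by
    intro u v hu hv huv
    by_cases hc : (1 - 1 / d) ∈ Ioo u v
    · have h1 : Hfn d (1 - 1 / d) < Hfn d u :=
        piece u (1 - 1 / d) hu.1 hc.1 (by linarith [hv.2, hc.2])
          (fun z hzm h => by rw [h] at hzm; exact absurd hzm.2 (lt_irrefl _))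
      have h2 : Hfn d v < Hfn d (1 - 1 / d) :=
        piece (1 - 1 / d) v (by linarith [hu.1, hc.1]) hc.2 hv.2
          (fun z hzm h => by rw [h] at hzm; exact absurd hzm.1 (lt_irrefl _))
      linarith
    · exact piece u v hu.1 huv hv.2 (fun z hzm h => hc (h ▸ hzm))
  -- endpoint values
  have hH0 : 0 < Hfn d 0 := by
    unfold Hfn
    simp only [sub_zero, Real.log_one, add_zero, mul_one]
    positivity
  set x₀ : ℝ := min (Real.exp (-(2 * d))) (1 / 2) with hx₀_def
  have hx₀0 : 0 < x₀ := lt_min (Real.exp_pos _) (by norm_num)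
  have hx₀1 : x₀ < 1 := lt_of_le_of_lt (min_le_right _ _) (by norm_num)
  have hHx₀ : Hfn d (1 - x₀) < 0 := by
    unfold Hfn
    rw [show (1:ℝ) - (1 - x₀) = x₀ by ring]
    have h1 : Real.exp (-d * x₀) ≤ 1 := Real.exp_le_one_iff.mpr (by nlinarith)
    have h2 : Real.log x₀ ≤ -(2 * d) := by
      calc Real.log x₀ ≤ Real.log (Real.exp (-(2 * d))) :=
            Real.log_le_log hx₀0 (min_le_left _ _)
      _ = -(2 * d) := Real.log_exp _
    nlinarith
  -- the unique zero of H
  obtain ⟨α', hα'mem, hα'⟩ : ∃ α' ∈ Ioo (0:ℝ) (1 - x₀), Hfn d α' = 0 := by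
    have hcont : ContinuousOn (Hfn d) (Icc 0 (1 - x₀)) :=
      (Hcont d).mono (fun y hy => mem_Iio.mpr (by cases hy; linarith))
    obtain ⟨x, hmem, hval⟩ :=
      intermediate_value_Ioo' (by linarith : (0:ℝ) ≤ 1 - x₀) hcont ⟨hHx₀, hH0⟩
    exact ⟨x, hmem, hval⟩
  have hα'0 : 0 < α' := hα'mem.1
  have hα'1 : α' < 1 := by linarith [hα'mem.2]
  have hα'fix : phiFn d α' = α' := (fixed_iff_H d hα'1).mpr hα'
  have hα'Ico : α' ∈ Ico (0:ℝ) 1 := ⟨hα'0.le, hα'1⟩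
  have huniq : ∀ α, α ∈ Set.Icc (0:ℝ) 1 → phiFn d α = α → α = α' := by
    intro α hαmem hαfix
    have hαlt1 : α < 1 := lt_of_le_of_ne hαmem.2 (fun h => phi_one_ne d (h ▸ hαfix))
    have hH : Hfn d α = 0 := (fixed_iff_H d hαlt1).mp hαfix
    rcases lt_trichotomy α α' with h | h | h
    · have := Hanti α α' ⟨hαmem.1, hαlt1⟩ hα'Ico h
      rw [hH, hα'] at this; exact absurd this (lt_irrefl _)
    · exact h
    · have := Hanti α' α hα'Ico ⟨hαmem.1, hαlt1⟩ h
      rw [hH, hα'] at this; exact absurd this (lt_irrefl _)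
  -- sign of H on either side
  have Hpos : ∀ z, 0 ≤ z → z < α' → 0 < Hfn d z := by
    intro z h0 h1
    have := Hanti z α' ⟨h0, by linarith⟩ hα'Ico h1
    rw [hα'] at this; exact this
  have Hneg : ∀ z, α' < z → z < 1 → Hfn d z < 0 := by
    intro z h1 h2
    have := Hanti α' z hα'Ico ⟨by linarith, h2⟩ h1
    rw [hα'] at this; exact this
  -- Φ monotonicity
  have hd2 : (0:ℝ) < d ^ 2 := by positivity
  have PhiMono : StrictMonoOn (PhiFn d) (Icc 0 α') := by
    apply strictMonoOn_of_deriv_pos (convex_Icc _ _) (Phi_cont d).continuousOn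
    rw [interior_Icc]
    intro z hz
    rw [(Phi_hasDeriv d z).deriv]
    exact mul_pos (mul_pos hd2 (Real.exp_pos _))
      (sub_pos.mpr (phi_gt_of_H_pos d (by linarith [hz.2]) (Hpos z hz.1.le hz.2)))
  have PhiAnti : StrictAntiOn (PhiFn d) (Icc α' 1) := by
    apply strictAntiOn_of_deriv_neg (convex_Icc _ _) (Phi_cont d).continuousOn
    rw [interior_Icc]
    intro z hz
    rw [(Phi_hasDeriv d z).deriv]
    exact mul_neg_of_pos_of_neg (mul_pos hd2 (Real.exp_pos _))
      (sub_neg.mpr (phi_lt_of_H_neg d hz.2 (Hneg z hz.1 hz.2)))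
  constructor
  · exact ⟨α', ⟨⟨hα'0.le, hα'1.le⟩, hα'fix⟩, fun y hy => huniq y hy.1 hy.2⟩
  · intro α hαmem hαfix β hβmem hβne
    have hαeq : α = α' := huniq α hαmem hαfix
    subst hαeq
    rcases lt_or_gt_of_ne hβne with h | h
    · exact PhiMono ⟨hβmem.1, h.le⟩ ⟨hα'0.le, le_refl _⟩ h
    · exact PhiAnti ⟨le_refl _, hα'1.le⟩ ⟨h.le, hβmem.2⟩ h

/-- (i) for `0 < d ≤ e`, `φ_d` has a unique fixed point in `[0,1]`, which is
the unique global maximiser of `Φ_d`; (ii) for `d > e`, `φ_d` has exactly the three fixed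
points `0 < α_* < α_0 < α^* < 1`, with `α_*, α^*` stable and `α_0` unstable,
`Φ_d(α_*) = Φ_d(α^*) > Φ_d(α)` for all other `α ∈ [0,1]`, and `1 − α_0 = exp(−d(1−α_0))`. -/
theorem statement6 :
    (∀ d : ℝ, 0 < d → d ≤ Real.exp 1 →
      (∃! α : ℝ, α ∈ Set.Icc (0:ℝ) 1 ∧ phiFn d α = α) ∧
      (∀ α ∈ Set.Icc (0:ℝ) 1, phiFn d α = α →
        ∀ β ∈ Set.Icc (0:ℝ) 1, β ≠ α → PhiFn d β < PhiFn d α)) ∧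
    (∀ d : ℝ, Real.exp 1 < d →
      0 < alphaMin d ∧ alphaMin d < alphaMid d ∧ alphaMid d < alphaMax d ∧ alphaMax d < 1 ∧
      {α : ℝ | α ∈ Set.Icc (0:ℝ) 1 ∧ phiFn d α = α} =
        {alphaMin d, alphaMid d, alphaMax d} ∧
      deriv (phiFn d) (alphaMin d) < 1 ∧
      deriv (phiFn d) (alphaMax d) < 1 ∧
      1 ≤ deriv (phiFn d) (alphaMid d) ∧
      PhiFn d (alphaMin d) = PhiFn d (alphaMax d) ∧
      (∀ α ∈ Set.Icc (0:ℝ) 1, α ≠ alphaMin d → α ≠ alphaMax d →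
        PhiFn d α < PhiFn d (alphaMin d)) ∧
      1 - alphaMid d = Real.exp (-d * (1 - alphaMid d))) := by
  constructor
  · intro d hd0 hde
    exact main_le d hd0 hde
  · intro d hd
    exact main_gt d hd
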